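/- Let L ≥ 1, α, β ∈ ℂ with |β|/2 ≤ |α| ≤ 2|β|, let μ ∈ ℂ be a zero of α − β e^{−iLξ} (i.e. α = β e^{−iLμ}), and let 0 < r < π/(8L). Then for every ξ on the circle |ξ − μ| = r, one has |α − β e^{−iLξ}| ≥ |α|·L·r/48. -/

import Mathlib

open Real

theorem stmt_18 (L : ℝ) (hL : 1 ≤ L) (α β μ : ℂ)
    (hαβ₁ : ‖β‖ / 2 ≤ ‖α‖)
    (hαβ₂ : ‖α‖ ≤ 2 * ‖β‖)
    (hμ : α = β * Complex.exp (-Complex.I * L * μ))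
    (r : ℝ) (hr0 : 0 < r) (hr : r < π / (8 * L)) :
    ∀ ξ : ℂ, ‖ξ - μ‖ = r →
      ‖α‖ * L * r / 48 ≤
        ‖α - β * Complex.exp (-Complex.I * L * ξ)‖ := by
  intro ξ hξ
  have hL0 : (0:ℝ) < L := lt_of_lt_of_le one_pos hL
  set w : ℂ := -Complex.I * L * (ξ - μ) with hw
  have habs_w : ‖w‖ = L * r := by
    rw [hw, norm_mul, norm_mul, hξ]
    simp [abs_of_pos hL0]
  have hLr : L * r < π / 8 := by
    have h8 : (0:ℝ) < 8 * L := by positivity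
    have := (lt_div_iff₀ h8).mp hr
    nlinarith
  have hLrpos : 0 < L * r := mul_pos hL0 hr0
  have hpi : π / 8 < (1:ℝ)/2 := by
    have := Real.pi_lt_d2
    linarith
  have hw1 : ‖w‖ ≤ 1 := by rw [habs_w]; linarith
  have hkey : α - β * Complex.exp (-Complex.I * L * ξ) =
      α * (1 - Complex.exp w) := by
    have harg : -Complex.I * L * μ + w = -Complex.I * L * ξ := by
      rw [hw]; ring
    have hsplit : Complex.exp (-Complex.I * L * ξ) =
        Complex.exp (-Complex.I * L * μ) * Complex.exp w := by
      rw [← Complex.exp_add, harg]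
    rw [hμ, hsplit]; ring
  rw [hkey, norm_mul]
  have hlow : ‖w‖ - (‖w‖)^2 ≤
      ‖1 - Complex.exp w‖ := by
    have h1 := Complex.norm_exp_sub_one_sub_id_le hw1
    have h2 : ‖w‖ ≤ ‖Complex.exp w - 1‖ +
        ‖Complex.exp w - 1 - w‖ := by
      calc ‖w‖ = ‖(Complex.exp w - 1) - (Complex.exp w - 1 - w)‖ := by
            congr 1; ring
        _ ≤ _ := norm_sub_le _ _
    have h3 : ‖Complex.exp w - 1‖ = ‖1 - Complex.exp w‖ := by
      rw [norm_sub_rev]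
    linarith
  have hstep : L * r / 48 ≤ ‖1 - Complex.exp w‖ := by
    rw [habs_w] at hlow
    nlinarith
  have hα0 : (0:ℝ) ≤ ‖α‖ := norm_nonneg _
  calc ‖α‖ * L * r / 48 = ‖α‖ * (L * r / 48) := by ring
    _ ≤ ‖α‖ * ‖1 - Complex.exp w‖ := by
        exact mul_le_mul_of_nonneg_left hstep hα0
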